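/- Let n ≥ 3 and let D be a dominating set of the cycle C_n with |D| ≤ n/2. If D does not contain three (cyclically) consecutive vertices of C_n, then D is not an accurate dominating set of C_n. -/

import Mathlib

/-- `D` is a dominating set of the simple graph `G`: every vertex not in `D`
is adjacent to at least one vertex in `D`. -/
def IsDomSet {V : Type*} (G : SimpleGraph V) (D : Finset V) : Prop :=
  ∀ v : V, v ∉ D → ∃ u ∈ D, G.Adj u v

/-- `D` is an accurate dominating set of `G`: a dominating set such that no subset of
`V \ D` of cardinality `|D|` is a dominating set of `G`. -/
def IsAccDomSet {V : Type*} (G : SimpleGraph V) (D : Finset V) : Prop :=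
  IsDomSet G D ∧
    ∀ E : Finset V, (∀ v ∈ E, v ∉ D) → E.card = D.card → ¬ IsDomSet G E

/-- The domination number of `G`: the minimum cardinality of a dominating set. -/
noncomputable def domNum {V : Type*} (G : SimpleGraph V) : ℕ :=
  sInf {k | ∃ D : Finset V, IsDomSet G D ∧ D.card = k}

/-- The accurate domination number of `G`: the minimum cardinality of an accurate
dominating set. -/
noncomputable def accDomNum {V : Type*} (G : SimpleGraph V) : ℕ :=
  sInf {k | ∃ D : Finset V, IsAccDomSet G D ∧ D.card = k}

/-- `d(G,i)`: the number of dominating sets of `G` of cardinality `i`. -/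
noncomputable def numDomSets {V : Type*} (G : SimpleGraph V) (i : ℕ) : ℕ :=
  Set.ncard {D : Finset V | IsDomSet G D ∧ D.card = i}

/-- `d_a(G,i)`: the number of accurate dominating sets of `G` of cardinality `i`. -/
noncomputable def numAccDomSets {V : Type*} (G : SimpleGraph V) (i : ℕ) : ℕ :=
  Set.ncard {D : Finset V | IsAccDomSet G D ∧ D.card = i}

/-- If a dominating set `D` of the cycle `C_n` (`n ≥ 3`) has `|D| ≤ n/2` and contains
no three cyclically consecutive vertices, then `D` is not an accurate dominating set. -/
theorem cycle_not_accurate_of_no_three_consecutive (n : ℕ) [NeZero n] (hn : 3 ≤ n)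
    (D : Finset (Fin n)) (hdom : IsDomSet (SimpleGraph.cycleGraph n) D)
    (hcard : 2 * D.card ≤ n)
    (hcons : ¬ ∃ j : Fin n, j ∈ D ∧ j + 1 ∈ D ∧ j + 2 ∈ D) :
    ¬ IsAccDomSet (SimpleGraph.cycleGraph n) D := by
  obtain ⟨m, rfl⟩ : ∃ m, n = m + 2 := ⟨n - 2, by omega⟩
  rintro ⟨-, hno⟩
  set g : Fin (m + 2) → Fin (m + 2) := fun j => if j + 1 ∈ D then j - 1 else j + 1 with hg
  have hadj : ∀ u v : Fin (m + 2),
      (SimpleGraph.cycleGraph (m + 2)).Adj u v ↔ u = v + 1 ∨ v = u + 1 := by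
    intro u v
    rw [SimpleGraph.cycleGraph_adj, sub_eq_iff_eq_add', sub_eq_iff_eq_add']
  have hgD : ∀ j ∈ D, g j ∉ D := by
    intro j hj hmem
    by_cases h1 : j + 1 ∈ D
    · rw [hg] at hmem; simp only [if_pos h1] at hmem
      exact hcons ⟨j - 1, hmem, by simpa using hj, by
        have : j - 1 + 2 = j + 1 := by open Fin.CommRing in ring
        rwa [this]⟩
    · rw [hg] at hmem; simp only [if_neg h1] at hmem
      exact h1 hmem
  set E0 := D.image g with hE0
  have hE0sub : E0 ⊆ Dᶜ := by
    intro x hx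
    simp only [hE0, Finset.mem_image] at hx
    obtain ⟨j, hj, rfl⟩ := hx
    simpa using hgD j hj
  have hDc : D.card ≤ Dᶜ.card := by
    have h1 := Finset.card_compl D
    have h2 : Fintype.card (Fin (m + 2)) = m + 2 := Fintype.card_fin _
    omega
  obtain ⟨E, hE0E, hEDc, hEcard⟩ :=
    Finset.exists_subsuperset_card_eq hE0sub Finset.card_image_le hDc
  -- E0 "dominates": every vertex is in E0 or adjacent to some element of E0
  have hdom2 : ∀ v : Fin (m + 2),
      v ∈ E0 ∨ ∃ u ∈ E0, (SimpleGraph.cycleGraph (m + 2)).Adj u v := by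
    intro v
    by_cases hvD : v ∈ D
    · right
      refine ⟨g v, Finset.mem_image_of_mem g hvD, ?_⟩
      rw [hadj, hg]
      by_cases h1 : v + 1 ∈ D
      · simp only [if_pos h1]; right; rw [sub_add_cancel]
      · simp [if_neg h1]
    · obtain ⟨u, huD, huv⟩ := hdom v hvD
      rw [hadj] at huv
      rcases huv with huv | huv
      · -- u = v + 1
        by_cases h2 : u + 1 ∈ D
        · left
          have hgu : g u = v := by rw [hg]; simp only [if_pos h2]; rw [huv, add_sub_cancel_right]
          rw [← hgu]; exact Finset.mem_image_of_mem g huD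
        · by_cases h3 : v - 1 ∈ D
          · left
            have hgw : g (v - 1) = v := by
              rw [hg]; simp only [sub_add_cancel, if_neg hvD]
            rw [← hgw]; exact Finset.mem_image_of_mem g h3
          · -- v - 1 ∉ D, so its dominator must be v - 2
            obtain ⟨w, hwD, hwadj⟩ := hdom (v - 1) h3
            rw [hadj] at hwadj
            have hw : w = v - 2 := by
              rcases hwadj with h | h
              · rw [sub_add_cancel] at h; exact absurd (h ▸ hwD) hvD
              · have : w = v - 1 - 1 := by
                  rw [h]; rw [add_sub_cancel_right]
                rw [this]; open Fin.CommRing in ring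
            right
            refine ⟨v - 1, ?_, ?_⟩
            · have hgw : g (v - 2) = v - 1 := by
                have h4 : v - 2 + 1 = v - 1 := by open Fin.CommRing in ring
                simp only [hg, h4, if_neg h3]
              rw [← hgw]; exact Finset.mem_image_of_mem g (hw ▸ hwD)
            · rw [hadj]; right; rw [sub_add_cancel]
      · -- v = u + 1, v ∉ D so g u = v
        left
        have hgu : g u = v := by rw [hg]; simp only [← huv, if_neg hvD]
        rw [← hgu]; exact Finset.mem_image_of_mem g huD
  refine hno E (fun v hv => by simpa using hEDc hv) hEcard ?_
  intro v hv
  rcases hdom2 v with h | ⟨u, hu, hadju⟩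
  · exact absurd (hE0E h) hv
  · exact ⟨u, hE0E hu, hadju⟩
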